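/- arXiv:1111.4392 — 6 statements merged into one kernel-verified Lean document; each statement's English description precedes it below -/
import Mathlib

section
/- Let T be a k-semigraph and Δ = T ⊔ Δ_μ with the partial multiplication described below. Then Δ is a semimultiplicative set, i.e. for all a,b,c ∈ Δ the product (ab)c is defined if and only if a(bc) is defined, and they are equal whenever defined. -/
/-- A semimultiplicative set: a partially defined associative multiplication,
encoded via `Option`: `mul s t = some u` means "`st` is defined and equals `u`". -/
structure SemimultSet (T : Type*) where
  mul : T → T → Option T
  assoc : ∀ s t u : T,
    (mul s t).bind (fun x => mul x u) = (mul t u).bind (fun y => mul s y)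

/-- A `k`-semigraph: a semimultiplicative set with a degree map `d : T → ℕ^k`
satisfying the unique factorisation property. -/
structure Semigraph (k : Type*) (T : Type*) extends SemimultSet T where
  d : T → k → ℕ
  deg_mul : ∀ x y z : T, mul x y = some z → d z = d x + d y
  factor : ∀ (x : T) (n₁ n₂ : k → ℕ), d x = n₁ + n₂ →
    ∃! p : T × T, mul p.1 p.2 = some x ∧ d p.1 = n₁ ∧ d p.2 = n₂

namespace Semigraph

variable {k T : Type*}

/-- `s ≤ t` iff there is `α` with `αs` defined and `αs = t`. -/
def le (S : Semigraph k T) (s t : T) : Prop := ∃ α : T, S.mul α s = some t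

/-- The set `Δ_μ` of tuples `yμ_{α₁,…,αₙ}` (`n ≥ 1`) with `y ≤ αᵢ` for some `i`. -/
def DeltaMu (S : Semigraph k T) : Type _ :=
  { p : T × List T // p.2 ≠ [] ∧ ∃ α ∈ p.2, S.le p.1 α }

/-- `Δ = T ⊔ Δ_μ`. -/
def Delta (S : Semigraph k T) : Type _ := T ⊕ S.DeltaMu

open scoped Classical in
/-- The partial multiplication on `Δ`: products within `T` as in `T`, and
`x · (yμ_α) = (xy)μ_α` whenever `xy` is defined and `(xy)μ_α ∈ Δ_μ`;
all other products are undefined. -/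
noncomputable def deltaMul (S : Semigraph k T) : S.Delta → S.Delta → Option S.Delta
  | Sum.inl x, Sum.inl y => (S.mul x y).map Sum.inl
  | Sum.inl x, Sum.inr ⟨(y, l), hp⟩ =>
      match S.mul x y with
      | some z =>
          if h : ∃ α ∈ l, S.le z α then some (Sum.inr ⟨(z, l), ⟨hp.1, h⟩⟩)
          else none
      | none => none
  | Sum.inr _, _ => none

/-- The minimal common extension set `T^min(x,y)`. -/
def Tmin (S : Semigraph k T) (x y : T) : Set (T × T) :=
  { p | ∃ z : T, S.mul x p.1 = some z ∧ S.mul y p.2 = some z ∧ S.d z = S.d x ⊔ S.d y }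

end Semigraph

/-- The canonical basis vector `δ_t` of `ℓ²(G)`. -/
noncomputable def deltaVec {G : Type*} (t : G) : lp (fun _ : G => ℂ) 2 :=
  haveI := Classical.decEq G
  lp.single 2 t 1

/-- `la` is the family of left translation operators associated to the partial
multiplication `m`: `la s δ_t = δ_{st}` if `st` is defined, and `0` otherwise. -/
def IsLambdaFam {G : Type*} (m : G → G → Option G)
    (la : G → (lp (fun _ : G => ℂ) 2 →L[ℂ] lp (fun _ : G => ℂ) 2)) : Prop :=
  ∀ s t : G, la s (deltaVec t) = (m s t).elim 0 deltaVec

/-- If `av = w` is defined and `w ≤ α`, then `v ≤ α`. -/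
lemma le_of_mul_le {k T : Type*} (S : Semigraph k T) {a v w α : T}
    (hav : S.mul a v = some w) (h : S.le w α) : S.le v α := by
  obtain ⟨β, hβ⟩ := h
  have hassoc := S.assoc β a v
  rw [hav] at hassoc
  simp only [Option.bind_some] at hassoc
  rw [hβ] at hassoc
  cases hβa : S.mul β a with
  | none => rw [hβa] at hassoc; simp at hassoc
  | some γ =>
      rw [hβa] at hassoc
      simp only [Option.bind_some] at hassoc
      exact ⟨γ, hassoc⟩

/-- `Δ = T ⊔ Δ_μ` with the described partial multiplication is a
semimultiplicative set, i.e. the multiplication is associative in the partial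
sense: `(ab)c` is defined iff `a(bc)` is defined, and then they agree. -/
theorem delta_semimultiplicative {k T : Type*} (S : Semigraph k T) :
    ∀ a b c : S.Delta,
      (S.deltaMul a b).bind (fun x => S.deltaMul x c) =
        (S.deltaMul b c).bind (fun y => S.deltaMul a y) := by
  classical
  rintro (a | a) (b | b) (c | ⟨⟨y, l⟩, hp⟩)
  · -- inl inl inl
    simp only [Semigraph.Delta, Semigraph.deltaMul]
    have hassoc := S.assoc a b c
    cases hab : S.mul a b with
    | none =>
        rw [hab] at hassoc
        simp only [Option.bind_none] at hassoc
        cases hbc : S.mul b c with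
        | none => simp [Semigraph.Delta, hab, hbc]
        | some v =>
            rw [hbc] at hassoc
            simp only [Option.bind_some] at hassoc
            simp [Semigraph.Delta, hab, hbc, Semigraph.deltaMul, ← hassoc]
    | some z =>
        rw [hab] at hassoc
        simp only [Option.bind_some] at hassoc
        cases hbc : S.mul b c with
        | none =>
            rw [hbc] at hassoc
            simp only [Option.bind_none] at hassoc
            simp [Semigraph.Delta, hab, hbc, Semigraph.deltaMul, hassoc]
        | some v =>
            rw [hbc] at hassoc
            simp only [Option.bind_some] at hassoc
            simp [Semigraph.Delta, hab, hbc, Semigraph.deltaMul, hassoc]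
  · -- inl inl inrμ
    have hassoc := S.assoc a b y
    cases hab : S.mul a b with
    | none =>
        rw [hab] at hassoc
        simp only [Option.bind_none] at hassoc
        simp only [Semigraph.Delta, Semigraph.deltaMul, hab, Option.map_none, Option.bind_none]
        cases hby : S.mul b y with
        | none => simp [Semigraph.Delta]
        | some v =>
            rw [hby] at hassoc
            simp only [Option.bind_some] at hassoc
            by_cases hv : ∃ α ∈ l, S.le v α
            · simp only [Semigraph.Delta, hv, dif_pos]
              simp [Semigraph.Delta, Semigraph.deltaMul, ← hassoc]
            · simp [Semigraph.Delta, hv]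
    | some z =>
        rw [hab] at hassoc
        simp only [Option.bind_some] at hassoc
        simp only [Semigraph.Delta, Semigraph.deltaMul, hab, Option.map_some, Option.bind_some]
        cases hby : S.mul b y with
        | none =>
            rw [hby] at hassoc
            simp only [Option.bind_none] at hassoc
            simp [Semigraph.Delta, Semigraph.deltaMul, hassoc]
        | some v =>
            rw [hby] at hassoc
            simp only [Option.bind_some] at hassoc
            -- hassoc : S.mul z y = S.mul a v
            by_cases hv : ∃ α ∈ l, S.le v α
            · simp only [Semigraph.Delta, hv, dif_pos, Option.bind_some]
              simp only [Semigraph.Delta, Semigraph.deltaMul, ← hassoc]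
            · simp only [Semigraph.Delta, hv, dif_neg, not_false_iff, Option.bind_none]
              cases hzy : S.mul z y with
              | none => simp [Semigraph.Delta, Semigraph.deltaMul, hzy]
              | some w =>
                  rw [hzy] at hassoc
                  have hw : ¬ ∃ α ∈ l, S.le w α := by
                    rintro ⟨α, hαl, hwα⟩
                    exact hv ⟨α, hαl, le_of_mul_le S hassoc.symm hwα⟩
                  simp [Semigraph.Delta, hw]
  · -- inl inrμ inl : b is inr, bc = none; ab is inr or none, then (·)c = none
    rcases b with ⟨⟨y, l⟩, hp⟩
    simp only [Semigraph.Delta, Semigraph.deltaMul]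
    cases hab : S.mul a y with
    | none => rfl
    | some z =>
        by_cases h : ∃ α ∈ l, S.le z α
        · simp [Semigraph.Delta, h, Semigraph.deltaMul]
        · simp [Semigraph.Delta, h]
  · rcases b with ⟨⟨y, l⟩, hp⟩
    simp only [Semigraph.Delta, Semigraph.deltaMul]
    cases hab : S.mul a y with
    | none => rfl
    | some z =>
        by_cases h : ∃ α ∈ l, S.le z α
        · simp [Semigraph.Delta, h, Semigraph.deltaMul]
        · simp [Semigraph.Delta, h]
  · -- inr inl inl
    simp only [Semigraph.Delta, Semigraph.deltaMul, Option.bind_none]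
    cases hbc : S.mul b c with
    | none => rfl
    | some z => rfl
  · -- inr inl inrμ
    simp only [Semigraph.Delta, Semigraph.deltaMul, Option.bind_none]
    cases hbc : S.mul b y with
    | none => rfl
    | some z =>
        by_cases h : ∃ α ∈ l, S.le z α
        · simp only [Semigraph.Delta, h, dif_pos]; rfl
        · simp [Semigraph.Delta, h]
  · rfl
  · rfl
end

section
/- Let T be a k-semigraph and Δ = T ⊔ Δ_μ the associated semimultiplicative set. Then Δ has left cancellation: for all a,b₁,b₂ ∈ Δ, if ab₁ and ab₂ are defined and ab₁ = ab₂, then b₁ = b₂. -/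
lemma Semigraph.mul_left_cancel {k T : Type*} (S : Semigraph k T) {x y₁ y₂ z : T}
    (h1 : S.mul x y₁ = some z) (h2 : S.mul x y₂ = some z) : y₁ = y₂ := by
  have d1 := S.deg_mul x y₁ z h1
  have d2 := S.deg_mul x y₂ z h2
  have hd : S.d y₁ = S.d y₂ := add_left_cancel (d1 ▸ d2 ▸ rfl : S.d x + S.d y₁ = S.d x + S.d y₂)
  obtain ⟨p, _, hu⟩ := S.factor z (S.d x) (S.d y₁) d1
  have e1 := hu (x, y₁) ⟨h1, rfl, rfl⟩
  have e2 := hu (x, y₂) ⟨h2, rfl, hd.symm⟩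
  exact congrArg Prod.snd (e1.trans e2.symm)

/-- `Δ` has left cancellation. -/
theorem delta_leftCancellation {k T : Type*} (S : Semigraph k T) :
    ∀ a b₁ b₂ c : S.Delta,
      S.deltaMul a b₁ = some c → S.deltaMul a b₂ = some c → b₁ = b₂ := by
  rintro (x | x) (y₁ | ⟨⟨y₁, l₁⟩, hp₁⟩) (y₂ | ⟨⟨y₂, l₂⟩, hp₂⟩) c h1 h2 <;>
    simp only [Semigraph.deltaMul] at h1 h2 <;> try exact (Option.some_ne_none _ h1.symm).elim
  · replace h1 := Option.map_eq_some_iff.mp h1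
    replace h2 := Option.map_eq_some_iff.mp h2
    obtain ⟨z₁, hz₁, rfl⟩ := h1
    obtain ⟨z₂, hz₂, hc⟩ := h2
    obtain rfl : z₂ = z₁ := Sum.inl.inj hc
    exact congrArg Sum.inl (S.mul_left_cancel hz₂ hz₁).symm
  · replace h1 := Option.map_eq_some_iff.mp h1
    obtain ⟨z₁, hz₁, rfl⟩ := h1
    rcases h : S.mul x y₂ with _ | z₂ <;> simp only [h] at h2
    · exact (Option.some_ne_none _ h2.symm).elim
    split at h2 <;> cases h2
  · replace h2 := Option.map_eq_some_iff.mp h2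
    obtain ⟨z₂, hz₂, rfl⟩ := h2
    rcases h : S.mul x y₁ with _ | z₁ <;> simp only [h] at h1
    · exact (Option.some_ne_none _ h1.symm).elim
    split at h1 <;> cases h1
  · rcases h : S.mul x y₁ with _ | z₁ <;> simp only [h] at h1
    · exact (Option.some_ne_none _ h1.symm).elim
    rcases h' : S.mul x y₂ with _ | z₂ <;> simp only [h'] at h2
    · exact (Option.some_ne_none _ h2.symm).elim
    split at h1
    swap; · exact (Option.some_ne_none _ h1.symm).elim
    split at h2
    swap; · exact (Option.some_ne_none _ h2.symm).elim
    replace h1 := Option.some.inj h1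
    replace h2 := Option.some.inj h2
    rw [← h2] at h1
    injection h1 with h1
    have h1' := congrArg Subtype.val h1
    simp only [Prod.mk.injEq] at h1'
    obtain ⟨rfl, rfl⟩ := h1'
    exact congrArg Sum.inr (Subtype.ext (Prod.ext (S.mul_left_cancel h h') rfl))
end

section
/- Let G be a semimultiplicative set with left cancellation and λ_s (s ∈ G) the associated operators on ℓ²(G). Then each λ_s is a partial isometry, i.e. λ_s λ_s* λ_s = λ_s; moreover λ_s*λ_s is the orthogonal projection onto the closed linear span of {δ_t : t ∈ G, st is defined} and λ_sλ_s* is the orthogonal projection onto the closed linear span of {δ_{st} : t ∈ G, st is defined}. -/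
open scoped InnerProductSpace

namespace LamAux

variable {G : Type*}

lemma deltaVec_eq [inst : DecidableEq G] (t : G) :
    deltaVec t = lp.single (E := fun _ : G => ℂ) 2 t 1 := by
  unfold deltaVec
  congr 1
  exact Subsingleton.elim _ _

lemma inner_deltaVec_left (t : G) (f : lp (fun _ : G => ℂ) 2) :
    ⟪deltaVec t, f⟫_ℂ = f t := by
  classical
  rw [deltaVec_eq, lp.inner_single_left]
  simp

lemma inner_delta_delta [DecidableEq G] (v u : G) :
    ⟪deltaVec v, deltaVec u⟫_ℂ = if u = v then 1 else 0 := by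
  rw [inner_deltaVec_left, deltaVec_eq]
  by_cases h : u = v
  · subst h; rw [lp.single_apply_self, if_pos rfl]
  · rw [lp.single_apply_ne _ _ _ (Ne.symm h), if_neg h]

lemma coord_ext {f g : lp (fun _ : G => ℂ) 2}
    (h : ∀ t : G, ⟪deltaVec t, f⟫_ℂ = ⟪deltaVec t, g⟫_ℂ) : f = g := by
  apply lp.ext
  funext t
  have := h t
  rwa [inner_deltaVec_left, inner_deltaVec_left] at this

lemma adj_some {m : G → G → Option G}
    (hcancel : ∀ s t₁ t₂ u : G, m s t₁ = some u → m s t₂ = some u → t₁ = t₂)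
    {la : G → (lp (fun _ : G => ℂ) 2 →L[ℂ] lp (fun _ : G => ℂ) 2)}
    (hla : ∀ s t : G, la s (deltaVec t) = (m s t).elim 0 deltaVec)
    {s t u : G} (h : m s t = some u) :
    ContinuousLinearMap.adjoint (la s) (deltaVec u) = deltaVec t := by
  classical
  apply coord_ext
  intro r
  rw [ContinuousLinearMap.adjoint_inner_right, hla, inner_delta_delta]
  cases hv : m s r with
  | none =>
    simp only [hv, Option.elim, inner_zero_left]
    rw [if_neg]
    rintro rfl
    rw [h] at hv
    exact Option.some_ne_none u hv
  | some v =>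
    simp only [hv, Option.elim]
    rw [inner_delta_delta]
    by_cases huv : u = v
    · subst huv
      rw [if_pos rfl, if_pos (hcancel s t r u h hv)]
    · rw [if_neg huv, if_neg]
      rintro rfl
      rw [h] at hv
      exact huv (Option.some.inj hv)

lemma adj_none {m : G → G → Option G}
    {la : G → (lp (fun _ : G => ℂ) 2 →L[ℂ] lp (fun _ : G => ℂ) 2)}
    (hla : ∀ s t : G, la s (deltaVec t) = (m s t).elim 0 deltaVec)
    {s u : G} (h : ∀ t, m s t ≠ some u) :
    ContinuousLinearMap.adjoint (la s) (deltaVec u) = 0 := by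
  classical
  apply coord_ext
  intro r
  rw [ContinuousLinearMap.adjoint_inner_right, hla, inner_zero_right]
  cases hv : m s r with
  | none => simp only [hv, Option.elim, inner_zero_left]
  | some v =>
    simp only [hv, Option.elim]
    rw [inner_delta_delta, if_neg]
    rintro rfl
    exact h r hv

lemma dense_span_delta :
    Dense ((Submodule.span ℂ (Set.range (deltaVec (G := G)))) : Set (lp (fun _ : G => ℂ) 2)) := by
  classical
  rw [dense_iff_closure_eq]
  refine Set.eq_univ_iff_forall.mpr fun f => ?_
  have hs := lp.hasSum_single (E := fun _ : G => ℂ) (p := 2) ENNReal.ofNat_ne_top f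
  refine mem_closure_of_tendsto hs ?_
  filter_upwards with fs
  rw [SetLike.mem_coe]
  refine Submodule.sum_mem _ fun i _ => ?_
  have h1 : lp.single (E := fun _ : G => ℂ) 2 i (f i) = f i • deltaVec i := by
    rw [deltaVec_eq, ← lp.single_smul, smul_eq_mul, mul_one]
  rw [h1]
  exact Submodule.smul_mem _ _ (Submodule.subset_span ⟨i, rfl⟩)

set_option synthInstance.maxHeartbeats 1000000 in
lemma clm_ext {A B : lp (fun _ : G => ℂ) 2 →L[ℂ] lp (fun _ : G => ℂ) 2}
    (h : ∀ t : G, A (deltaVec t) = B (deltaVec t)) : A = B := by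
  refine ContinuousLinearMap.ext_on (dense_span_delta (G := G)) ?_
  rintro _ ⟨t, rfl⟩
  exact h t

lemma range_proj (p : lp (fun _ : G => ℂ) 2 →L[ℂ] lp (fun _ : G => ℂ) 2)
    (hp : IsIdempotentElem p) (Sset : Set (lp (fun _ : G => ℂ) 2))
    (h1 : ∀ v ∈ Sset, p v = v)
    (h2 : ∀ t : G, p (deltaVec t) ∈ Submodule.span ℂ Sset) :
    LinearMap.range (p : lp (fun _ : G => ℂ) 2 →ₗ[ℂ] lp (fun _ : G => ℂ) 2) = (Submodule.span ℂ Sset).topologicalClosure := by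
  have hfix : ∀ x, x ∈ LinearMap.range (p : lp (fun _ : G => ℂ) 2 →ₗ[ℂ] lp (fun _ : G => ℂ) 2) ↔ p x = x := by
    intro x
    constructor
    · rintro ⟨y, rfl⟩
      have := congrArg (fun q : lp (fun _ : G => ℂ) 2 →L[ℂ] lp (fun _ : G => ℂ) 2 => q y) hp
      simpa [ContinuousLinearMap.mul_apply] using this
    · intro h; exact ⟨x, h⟩
  apply le_antisymm
  · rintro x ⟨y, rfl⟩
    have hy : (y : lp (fun _ : G => ℂ) 2) ∈
        closure ((Submodule.span ℂ (Set.range (deltaVec (G := G)))) : Set (lp (fun _ : G => ℂ) 2)) := by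
      rw [(dense_span_delta (G := G)).closure_eq]; trivial
    have h3 : p y ∈ closure
        (⇑p '' ((Submodule.span ℂ (Set.range (deltaVec (G := G)))) : Set (lp (fun _ : G => ℂ) 2))) :=
      image_closure_subset_closure_image p.continuous ⟨y, hy, rfl⟩
    have h4 : ⇑p '' ((Submodule.span ℂ (Set.range (deltaVec (G := G)))) : Set (lp (fun _ : G => ℂ) 2))
        ⊆ (Submodule.span ℂ Sset : Set (lp (fun _ : G => ℂ) 2)) := by
      have hm : Submodule.map (p : lp (fun _ : G => ℂ) 2 →ₗ[ℂ] lp (fun _ : G => ℂ) 2)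
          (Submodule.span ℂ (Set.range (deltaVec (G := G)))) ≤ Submodule.span ℂ Sset := by
        rw [Submodule.map_span]
        refine Submodule.span_le.mpr ?_
        rintro _ ⟨_, ⟨t, rfl⟩, rfl⟩
        exact h2 t
      rintro _ ⟨w, hw, rfl⟩
      exact hm ⟨w, hw, rfl⟩
    exact closure_mono h4 h3
  · refine Submodule.topologicalClosure_minimal _
      (Submodule.span_le.mpr fun v hv => (hfix v).mpr (h1 v hv)) ?_
    have hset : (LinearMap.range (p : lp (fun _ : G => ℂ) 2 →ₗ[ℂ] lp (fun _ : G => ℂ) 2) : Set (lp (fun _ : G => ℂ) 2)) = {x | p x = x} :=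
      Set.ext fun x => hfix x
    rw [hset]
    exact isClosed_eq p.continuous continuous_id

end LamAux

/-- each `λ_s` is a partial isometry; `λ_s*λ_s` is the orthogonal
projection (self-adjoint idempotent with the stated range) onto the closed span
of the `δ_t` with `st` defined, and `λ_sλ_s*` is the orthogonal projection onto
the closed span of the corresponding `δ_(st)`. -/
theorem lambda_partialIsometry {G : Type*} (S : SemimultSet G)
    (hcancel : ∀ s t₁ t₂ u : G, S.mul s t₁ = some u → S.mul s t₂ = some u → t₁ = t₂)
    (la : G → (lp (fun _ : G => ℂ) 2 →L[ℂ] lp (fun _ : G => ℂ) 2))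
    (hla : IsLambdaFam S.mul la) (s : G) :
    la s * ContinuousLinearMap.adjoint (la s) * la s = la s ∧
    (IsSelfAdjoint (ContinuousLinearMap.adjoint (la s) * la s) ∧
      IsIdempotentElem (ContinuousLinearMap.adjoint (la s) * la s) ∧
      LinearMap.range (((ContinuousLinearMap.adjoint (la s) * la s : lp (fun _ : G => ℂ) 2 →L[ℂ] lp (fun _ : G => ℂ) 2)) : lp (fun _ : G => ℂ) 2 →ₗ[ℂ] lp (fun _ : G => ℂ) 2) =
        (Submodule.span ℂ
          {v : lp (fun _ : G => ℂ) 2 | ∃ t u : G, S.mul s t = some u ∧ v = deltaVec t}).topologicalClosure) ∧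
    (IsSelfAdjoint (la s * ContinuousLinearMap.adjoint (la s)) ∧
      IsIdempotentElem (la s * ContinuousLinearMap.adjoint (la s)) ∧
      LinearMap.range (((la s * ContinuousLinearMap.adjoint (la s) : lp (fun _ : G => ℂ) 2 →L[ℂ] lp (fun _ : G => ℂ) 2)) : lp (fun _ : G => ℂ) 2 →ₗ[ℂ] lp (fun _ : G => ℂ) 2) =
        (Submodule.span ℂ
          {v : lp (fun _ : G => ℂ) 2 | ∃ t u : G, S.mul s t = some u ∧ v = deltaVec u}).topologicalClosure) := by
  classical
  set A := la s with hA
  set B := ContinuousLinearMap.adjoint (la s) with hB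
  have hsome : ∀ {t u : G}, S.mul s t = some u → A (deltaVec t) = deltaVec u := by
    intro t u h
    rw [hA, hla s t, h]
    rfl
  have hnone : ∀ {t : G}, S.mul s t = none → A (deltaVec t) = 0 := by
    intro t h
    rw [hA, hla s t, h]
    rfl
  have hadj_some : ∀ {t u : G}, S.mul s t = some u → B (deltaVec u) = deltaVec t := by
    intro t u h
    exact LamAux.adj_some hcancel hla h
  have hadj_none : ∀ {u : G}, (∀ t, S.mul s t ≠ some u) → B (deltaVec u) = 0 := by
    intro u h
    exact LamAux.adj_none hla h
  have key : A * B * A = A := by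
    apply LamAux.clm_ext
    intro t
    cases h : S.mul s t with
    | none =>
      simp only [ContinuousLinearMap.mul_apply, hnone h, map_zero]
    | some u =>
      simp only [ContinuousLinearMap.mul_apply]
      rw [hsome h, hadj_some h, hsome h]
  have hp_fix : ∀ {t u : G}, S.mul s t = some u → (B * A) (deltaVec t) = deltaVec t := by
    intro t u h
    simp only [ContinuousLinearMap.mul_apply]
    rw [hsome h, hadj_some h]
  have hp_zero : ∀ {t : G}, S.mul s t = none → (B * A) (deltaVec t) = 0 := by
    intro t h
    simp only [ContinuousLinearMap.mul_apply]
    rw [hnone h, map_zero]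
  have hq_fix : ∀ {t u : G}, S.mul s t = some u → (A * B) (deltaVec u) = deltaVec u := by
    intro t u h
    simp only [ContinuousLinearMap.mul_apply]
    rw [hadj_some h, hsome h]
  have hq_zero : ∀ {u : G}, (∀ t, S.mul s t ≠ some u) → (A * B) (deltaVec u) = 0 := by
    intro u h
    simp only [ContinuousLinearMap.mul_apply]
    rw [hadj_none h, map_zero]
  have idem_p : IsIdempotentElem (B * A) := by
    show B * A * (B * A) = B * A
    calc B * A * (B * A) = B * (A * B * A) := by
          rw [mul_assoc, ← mul_assoc A B A]
      _ = B * A := by rw [key]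
  have idem_q : IsIdempotentElem (A * B) := by
    show A * B * (A * B) = A * B
    calc A * B * (A * B) = A * B * A * B := by rw [← mul_assoc]
      _ = A * B := by rw [key]
  have selfadj_p : IsSelfAdjoint (B * A) := by
    rw [IsSelfAdjoint, star_mul, hB, ContinuousLinearMap.star_eq_adjoint,
      ContinuousLinearMap.star_eq_adjoint, ContinuousLinearMap.adjoint_adjoint]
  have selfadj_q : IsSelfAdjoint (A * B) := by
    rw [IsSelfAdjoint, star_mul, hB, ContinuousLinearMap.star_eq_adjoint,
      ContinuousLinearMap.star_eq_adjoint, ContinuousLinearMap.adjoint_adjoint]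
  refine ⟨key, ⟨selfadj_p, idem_p, ?_⟩, ⟨selfadj_q, idem_q, ?_⟩⟩
  · apply LamAux.range_proj
    · exact idem_p
    · rintro v ⟨t, u, h, rfl⟩
      exact hp_fix h
    · intro t
      cases h : S.mul s t with
      | none =>
        rw [hp_zero h]
        exact Submodule.zero_mem _
      | some u =>
        rw [hp_fix h]
        exact Submodule.subset_span ⟨t, u, h, rfl⟩
  · apply LamAux.range_proj
    · exact idem_q
    · rintro v ⟨t, u, h, rfl⟩
      exact hq_fix h
    · intro r
      by_cases hex : ∃ t, S.mul s t = some r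
      · obtain ⟨t, ht⟩ := hex
        rw [hq_fix ht]
        exact Submodule.subset_span ⟨t, r, ht, rfl⟩
      · rw [hq_zero fun t h => hex ⟨t, h⟩]
        exact Submodule.zero_mem _
end

section
/- Let G be a semimultiplicative set with left cancellation and λ_s (s ∈ G) the associated operators on ℓ²(G). For all s,t ∈ G, the four orthogonal projections λ_s*λ_s, λ_t*λ_t, λ_sλ_s* and λ_tλ_t* pairwise commute. -/
section Aux

open scoped Classical

variable {G : Type*}

private lemma dv_apply (t u : G) :
    (deltaVec t : lp (fun _ : G => ℂ) 2) u = if u = t then 1 else 0 := by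
  show (lp.single (E := fun _ : G => ℂ) 2 t (1 : ℂ)) u = _
  split_ifs with h
  · subst h; exact lp.single_apply_self _ _ _
  · exact lp.single_apply_ne _ _ _ h

private lemma dv_ext {f g : lp (fun _ : G => ℂ) 2} (h : ∀ t, f t = g t) : f = g :=
  lp.ext (funext h)

private lemma inner_dv_left (t : G) (f : lp (fun _ : G => ℂ) 2) :
    (inner ℂ (deltaVec t) f : ℂ) = f t := by
  simpa [deltaVec, RCLike.inner_apply] using
    lp.inner_single_left (𝕜 := ℂ) (G := fun _ : G => ℂ) t (1 : ℂ) f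

private lemma inner_dv_right (t : G) (f : lp (fun _ : G => ℂ) 2) :
    (inner ℂ f (deltaVec t) : ℂ) = starRingEnd ℂ (f t) := by
  simpa [deltaVec, RCLike.inner_apply] using
    lp.inner_single_right (𝕜 := ℂ) (G := fun _ : G => ℂ) t (1 : ℂ) f

private lemma clm_ext {A B : lp (fun _ : G => ℂ) 2 →L[ℂ] lp (fun _ : G => ℂ) 2}
    (h : ∀ t : G, A (deltaVec t) = B (deltaVec t)) : A = B := by
  refine ContinuousLinearMap.ext fun f => ?_
  have hf : HasSum (fun i : G => lp.single 2 i (f i)) f :=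
    lp.hasSum_single ENNReal.ofNat_ne_top f
  have key : ∀ i : G, lp.single 2 i (f i) = f i • deltaVec i := by
    intro i
    have := lp.single_smul (E := fun _ : G => ℂ) 2 i (f i) (1 : ℂ)
    simp only [deltaVec]
    convert this using 3 <;> simp
  have hA : HasSum (fun i : G => A (lp.single 2 i (f i))) (A f) := A.hasSum hf
  have hB : HasSum (fun i : G => B (lp.single 2 i (f i))) (B f) := B.hasSum hf
  refine hA.unique ?_
  have : (fun i : G => A (lp.single 2 i (f i))) = fun i : G => B (lp.single 2 i (f i)) := by
    funext i
    rw [key, map_smul, map_smul, h]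
  rw [this]
  exact hB

private lemma adj_apply (A : lp (fun _ : G => ℂ) 2 →L[ℂ] lp (fun _ : G => ℂ) 2) (u t : G) :
    ((ContinuousLinearMap.adjoint A) (deltaVec u) : lp (fun _ : G => ℂ) 2) t
      = starRingEnd ℂ ((A (deltaVec t)) u) := by
  rw [← inner_dv_left, ContinuousLinearMap.adjoint_inner_right, inner_dv_right]

private lemma la_apply (m : G → G → Option G)
    (la : G → (lp (fun _ : G => ℂ) 2 →L[ℂ] lp (fun _ : G => ℂ) 2))
    (hla : IsLambdaFam m la) (s t u : G) :
    (la s (deltaVec t)) u = if m s t = some u then 1 else 0 := by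
  rw [hla s t]
  cases h : m s t with
  | none => simp
  | some v =>
    show (deltaVec v : lp (fun _ : G => ℂ) 2) u = _
    rw [dv_apply]
    simp only [Option.some.injEq]
    by_cases huv : u = v
    · subst huv; simp
    · rw [if_neg huv, if_neg fun h' => huv h'.symm]

private lemma adj_la_apply (m : G → G → Option G)
    (la : G → (lp (fun _ : G => ℂ) 2 →L[ℂ] lp (fun _ : G => ℂ) 2))
    (hla : IsLambdaFam m la) (s u t : G) :
    ((ContinuousLinearMap.adjoint (la s)) (deltaVec u)) t
      = if m s t = some u then 1 else 0 := by
  rw [adj_apply, la_apply m la hla]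
  split_ifs <;> simp

private lemma diag_commute {A B : lp (fun _ : G => ℂ) 2 →L[ℂ] lp (fun _ : G => ℂ) 2}
    (hA : ∀ u : G, ∃ c : ℂ, A (deltaVec u) = c • deltaVec u)
    (hB : ∀ u : G, ∃ c : ℂ, B (deltaVec u) = c • deltaVec u) : Commute A B := by
  show A * B = B * A
  apply clm_ext
  intro u
  obtain ⟨a, ha⟩ := hA u
  obtain ⟨b, hb⟩ := hB u
  rw [ContinuousLinearMap.mul_apply, ContinuousLinearMap.mul_apply, ha, hb,
    map_smul, map_smul, ha, hb, smul_comm]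

end Aux

/-- the projections `λ_s*λ_s`, `λ_t*λ_t`, `λ_sλ_s*`, `λ_tλ_t*`
pairwise commute. -/
theorem lambda_projections_commute {G : Type*} (S : SemimultSet G)
    (hcancel : ∀ s t₁ t₂ u : G, S.mul s t₁ = some u → S.mul s t₂ = some u → t₁ = t₂)
    (la : G → (lp (fun _ : G => ℂ) 2 →L[ℂ] lp (fun _ : G => ℂ) 2))
    (hla : IsLambdaFam S.mul la) (s t : G) :
    Commute (ContinuousLinearMap.adjoint (la s) * la s)
      (ContinuousLinearMap.adjoint (la t) * la t) ∧
    Commute (ContinuousLinearMap.adjoint (la s) * la s)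
      (la s * ContinuousLinearMap.adjoint (la s)) ∧
    Commute (ContinuousLinearMap.adjoint (la s) * la s)
      (la t * ContinuousLinearMap.adjoint (la t)) ∧
    Commute (ContinuousLinearMap.adjoint (la t) * la t)
      (la s * ContinuousLinearMap.adjoint (la s)) ∧
    Commute (ContinuousLinearMap.adjoint (la t) * la t)
      (la t * ContinuousLinearMap.adjoint (la t)) ∧
    Commute (la s * ContinuousLinearMap.adjoint (la s))
      (la t * ContinuousLinearMap.adjoint (la t)) := by
  have hD : ∀ s' u : G, ∃ c : ℂ,
      (ContinuousLinearMap.adjoint (la s') * la s') (deltaVec u) = c • deltaVec u := by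
    intro s' u
    cases h : S.mul s' u with
    | none =>
      refine ⟨0, ?_⟩
      simp [ContinuousLinearMap.mul_apply, hla s' u, h]
    | some v =>
      refine ⟨1, ?_⟩
      rw [one_smul, ContinuousLinearMap.mul_apply, hla s' u, h]
      show ContinuousLinearMap.adjoint (la s') (deltaVec v) = deltaVec u
      apply dv_ext
      intro t'
      rw [adj_la_apply S.mul la hla, dv_apply]
      by_cases htu : t' = u
      · subst htu; simp [h]
      · have hne : S.mul s' t' ≠ some v := fun hc => htu (hcancel s' t' u v hc h)
        simp [hne, htu]
  have hR : ∀ s' u : G, ∃ c : ℂ,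
      (la s' * ContinuousLinearMap.adjoint (la s')) (deltaVec u) = c • deltaVec u := by
    intro s' u
    by_cases h : ∃ t₀ : G, S.mul s' t₀ = some u
    · obtain ⟨t₀, h₀⟩ := h
      refine ⟨1, ?_⟩
      have hadj : ContinuousLinearMap.adjoint (la s') (deltaVec u) = deltaVec t₀ := by
        apply dv_ext
        intro t'
        rw [adj_la_apply S.mul la hla, dv_apply]
        by_cases ht : t' = t₀
        · subst ht; simp [h₀]
        · have hne : S.mul s' t' ≠ some u := fun hc => ht (hcancel s' t' t₀ u hc h₀)
          simp [hne, ht]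
      rw [one_smul, ContinuousLinearMap.mul_apply, hadj, hla s' t₀, h₀]
      rfl
    · refine ⟨0, ?_⟩
      have hadj : ContinuousLinearMap.adjoint (la s') (deltaVec u) = 0 := by
        apply dv_ext
        intro t'
        rw [adj_la_apply S.mul la hla]
        have hne : S.mul s' t' ≠ some u := fun hc => h ⟨t', hc⟩
        simp [hne]
      simp [ContinuousLinearMap.mul_apply, hadj]
  exact ⟨diag_commute (hD s) (hD t), diag_commute (hD s) (hR s), diag_commute (hD s) (hR t),
    diag_commute (hD t) (hR s), diag_commute (hD t) (hR t), diag_commute (hR s) (hR t)⟩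
end

section
/- Let T be a k-semigraph in which every element of T^(0) is idempotent, and let Δ = T ⊔ Δ_μ be the associated left-cancellative semimultiplicative set with operators λ_a (a ∈ Δ) on ℓ²(Δ). Then the map T → B(ℓ²(Δ)), t ↦ λ_t, is injective, and λ_t ≠ 0 for every t ∈ T. -/
private lemma deltaVec_ne_zero {G : Type*} (t : G) : deltaVec t ≠ 0 := by
  classical
  intro h
  have h2 : (deltaVec t : ∀ _ : G, ℂ) t = 0 := by rw [h]; rfl
  rw [deltaVec, lp.single_apply_self] at h2
  exact one_ne_zero h2

private lemma deltaVec_inj {G : Type*} {a b : G} (h : deltaVec a = deltaVec b) : a = b := by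
  classical
  by_contra hne
  have h2 : (deltaVec a : ∀ _ : G, ℂ) a = (deltaVec b : ∀ _ : G, ℂ) a := by rw [h]
  rw [deltaVec, deltaVec, lp.single_apply_self, lp.single_apply_ne _ _ _ hne] at h2
  exact one_ne_zero h2

/-- the map `t ↦ λ_t` (`t ∈ T`) is injective and nowhere zero. -/
theorem lambda_injective_nonzero {k T : Type*} (S : Semigraph k T)
    (hidem : ∀ e : T, S.d e = 0 → S.mul e e = some e)
    (la : S.Delta → (lp (fun _ : S.Delta => ℂ) 2 →L[ℂ] lp (fun _ : S.Delta => ℂ) 2))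
    (hla : IsLambdaFam S.deltaMul la) :
    Function.Injective (fun t : T => la (Sum.inl t)) ∧
    ∀ t : T, la (Sum.inl t) ≠ 0 := by
  classical
  -- every t has a "source" e with t·e = t and d e = 0
  have hsrc : ∀ t : T, ∃ e : T, S.mul t e = some t ∧ S.d e = 0 := by
    intro t
    obtain ⟨p, ⟨hp1, hp2, hp3⟩, huniq⟩ := S.factor t (S.d t) 0 (by simp)
    refine ⟨p.2, ?_, hp3⟩
    have hee : S.mul p.2 p.2 = some p.2 := hidem p.2 hp3
    have ha := S.assoc p.1 p.2 p.2
    rw [hp1, hee] at ha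
    simpa [hp1] using ha
  have key : ∀ t : T, ∃ e : T, S.mul t e = some t ∧ S.d e = 0 ∧
      la (Sum.inl t) (deltaVec (Sum.inl e)) = deltaVec (Sum.inl t) := by
    intro t
    obtain ⟨e, hte, hde⟩ := hsrc t
    refine ⟨e, hte, hde, ?_⟩
    have := hla (Sum.inl t) (Sum.inl e)
    rw [this]
    simp [Semigraph.deltaMul, hte]
    rfl
  constructor
  · intro t t' h
    simp only at h
    obtain ⟨e, hte, hde, heq⟩ := key t
    have h2 := hla (Sum.inl t') (Sum.inl e)
    rw [← h, heq] at h2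
    -- h2 : deltaVec (inl t) = (deltaMul (inl t') (inl e)).elim 0 deltaVec
    have hmul : S.mul t' e = some t := by
      rcases hz : S.mul t' e with _ | z
      · rw [show S.deltaMul (Sum.inl t') (Sum.inl e) = (S.mul t' e).map Sum.inl from rfl,
          hz] at h2
        exact absurd h2 (deltaVec_ne_zero _)
      · rw [show S.deltaMul (Sum.inl t') (Sum.inl e) = (S.mul t' e).map Sum.inl from rfl,
          hz] at h2
        simp only [Option.map_some, Option.elim] at h2
        obtain rfl : t = z := Sum.inl.inj (deltaVec_inj h2)
        rfl
    have hdt : S.d t = S.d t' := by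
      have := S.deg_mul t' e t hmul
      simp [hde] at this
      exact this
    obtain ⟨p, hp, huniq⟩ := S.factor t (S.d t) 0 (by simp)
    have e1 := huniq (t, e) ⟨hte, rfl, hde⟩
    have e2 := huniq (t', e) ⟨hmul, hdt.symm, hde⟩
    have : (t, e) = (t', e) := e1.trans e2.symm
    exact (Prod.mk.injEq _ _ _ _ ▸ this).1
  · intro t ht
    obtain ⟨e, hte, hde, heq⟩ := key t
    rw [ht] at heq
    exact deltaVec_ne_zero _ (heq.symm.trans (ContinuousLinearMap.zero_apply _))
end

section
/- Let T be a finitely aligned k-semigraph in which every element of T^(0) is idempotent, and let Δ = T ⊔ Δ_μ be the associated left-cancellative semimultiplicative set with operators λ_a (a ∈ Δ) on ℓ²(Δ). Then for all x,y ∈ T: λ_x λ_x* λ_y λ_y* = Σ_{(e,f) ∈ T^min(x,y)} λ_{xe} λ_{xe}* (a finite sum; note that xe = yf for (e,f) ∈ T^min(x,y)). -/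
namespace Semigraph

variable {k T : Type*} (S : Semigraph k T)

lemma mul_left_cancel_s16 {x a b z : T} (ha : S.mul x a = some z) (hb : S.mul x b = some z) :
    a = b := by
  have h1 := S.deg_mul x a z ha
  have h2 := S.deg_mul x b z hb
  have hd : S.d a = S.d b := by
    funext i
    have e1 := congrFun h1 i
    have e2 := congrFun h2 i
    simp only [Pi.add_apply] at e1 e2
    omega
  obtain ⟨p, _, hu⟩ := S.factor z (S.d x) (S.d a) h1
  have hxa := hu (x, a) ⟨ha, rfl, rfl⟩
  have hxb := hu (x, b) ⟨hb, rfl, hd.symm⟩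
  exact congrArg Prod.snd (hxa.trans hxb.symm)

lemma assoc_right {s t u v w : T} (h1 : S.mul s t = some u) (h2 : S.mul u v = some w) :
    ∃ r, S.mul t v = some r ∧ S.mul s r = some w := by
  have h := S.assoc s t v
  rw [h1] at h
  simp only [Option.bind_some] at h
  rw [h2] at h
  cases hr : S.mul t v with
  | none => rw [hr] at h; simp at h
  | some r =>
    rw [hr] at h
    simp only [Option.bind_some] at h
    exact ⟨r, rfl, h.symm⟩

lemma assoc_left {s t u v w : T} (h1 : S.mul t v = some u) (h2 : S.mul s u = some w) :
    ∃ r, S.mul s t = some r ∧ S.mul r v = some w := by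
  have h := S.assoc s t v
  rw [h1] at h
  simp only [Option.bind_some] at h
  rw [h2] at h
  cases hr : S.mul s t with
  | none => rw [hr] at h; simp at h
  | some r =>
    rw [hr] at h
    simp only [Option.bind_some] at h
    exact ⟨r, rfl, h⟩

/-- `x` divides `t` on the left in `T`. -/
def divT (x t : T) : Prop := ∃ b, S.mul x b = some t

lemma Tmin_exists {x y t : T} (hx : S.divT x t) (hy : S.divT y t) :
    ∃ p ∈ S.Tmin x y, ∃ z, S.mul x p.1 = some z ∧ S.divT z t := by
  obtain ⟨b, hb⟩ := hx
  obtain ⟨c, hc⟩ := hy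
  have hdx := S.deg_mul x b t hb
  have hdy := S.deg_mul y c t hc
  -- factor t at degree (d x ⊔ d y)
  have hsum : S.d t = (S.d x ⊔ S.d y) + fun i => S.d t i - (S.d x ⊔ S.d y) i := by
    funext i
    have e1 := congrFun hdx i
    have e2 := congrFun hdy i
    simp only [Pi.add_apply, Pi.sup_apply] at e1 e2 ⊢
    omega
  obtain ⟨⟨z, w⟩, ⟨hzw, hdz, hdw⟩, _⟩ := S.factor t (S.d x ⊔ S.d y) _ hsum
  dsimp only at hzw hdz hdw
  -- factor z at degree (d x)
  have hzsum : S.d z = S.d x + fun i => S.d z i - S.d x i := by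
    funext i
    have e := congrFun hdz i
    simp only [Pi.add_apply, Pi.sup_apply] at e ⊢
    omega
  obtain ⟨⟨x₁, e⟩, ⟨hx₁e, hdx₁, _⟩, _⟩ := S.factor z (S.d x) _ hzsum
  dsimp only at hx₁e hdx₁
  obtain ⟨v, hev, hx₁v⟩ := S.assoc_right hx₁e hzw
  -- x₁ = x by uniqueness of factorisation of t
  have htsum : S.d t = S.d x + fun i => S.d t i - S.d x i := by
    funext i
    have e1 := congrFun hdx i
    simp only [Pi.add_apply] at e1 ⊢
    omega
  obtain ⟨pt, _, hut⟩ := S.factor t (S.d x) _ htsum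
  have hdv : S.d v = fun i => S.d t i - S.d x i := by
    have h1 := S.deg_mul x₁ v t hx₁v
    funext i
    show S.d v i = S.d t i - S.d x i
    have e1 := congrFun h1 i
    have e2 := congrFun hdx₁ i
    simp only [Pi.add_apply] at e1
    omega
  have hdb : S.d b = fun i => S.d t i - S.d x i := by
    funext i
    show S.d b i = S.d t i - S.d x i
    have e1 := congrFun hdx i
    simp only [Pi.add_apply] at e1 ⊢
    omega
  have h1 := hut (x₁, v) ⟨hx₁v, hdx₁, hdv⟩
  have h2 := hut (x, b) ⟨hb, rfl, hdb⟩
  have hx₁x : x₁ = x := congrArg Prod.fst (h1.trans h2.symm)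
  subst hx₁x
  -- same for y
  have hzsumy : S.d z = S.d y + fun i => S.d z i - S.d y i := by
    funext i
    have e := congrFun hdz i
    simp only [Pi.add_apply, Pi.sup_apply] at e ⊢
    omega
  obtain ⟨⟨y₁, f⟩, ⟨hy₁f, hdy₁, _⟩, _⟩ := S.factor z (S.d y) _ hzsumy
  dsimp only at hy₁f hdy₁
  obtain ⟨v', _, hy₁v'⟩ := S.assoc_right hy₁f hzw
  have htsumy : S.d t = S.d y + fun i => S.d t i - S.d y i := by
    funext i
    have e1 := congrFun hdy i
    simp only [Pi.add_apply] at e1 ⊢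
    omega
  obtain ⟨pty, _, huty⟩ := S.factor t (S.d y) _ htsumy
  have hdv' : S.d v' = fun i => S.d t i - S.d y i := by
    have h1 := S.deg_mul y₁ v' t hy₁v'
    funext i
    show S.d v' i = S.d t i - S.d y i
    have e1 := congrFun h1 i
    have e2 := congrFun hdy₁ i
    simp only [Pi.add_apply] at e1
    omega
  have hdc : S.d c = fun i => S.d t i - S.d y i := by
    funext i
    show S.d c i = S.d t i - S.d y i
    have e1 := congrFun hdy i
    simp only [Pi.add_apply] at e1 ⊢
    omega
  have h1' := huty (y₁, v') ⟨hy₁v', hdy₁, hdv'⟩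
  have h2' := huty (y, c) ⟨hc, rfl, hdc⟩
  have hy₁y : y₁ = y := congrArg Prod.fst (h1'.trans h2'.symm)
  subst hy₁y
  exact ⟨(e, f), ⟨z, hx₁e, hy₁f, hdz⟩, z, hx₁e, w, hzw⟩

lemma Tmin_unique {x y t : T} {p q : T × T}
    (hp : p ∈ S.Tmin x y) (hq : q ∈ S.Tmin x y)
    {zp zq : T} (hzp : S.mul x p.1 = some zp) (hzq : S.mul x q.1 = some zq)
    (hdp : S.divT zp t) (hdq : S.divT zq t) : p = q := by
  obtain ⟨z', hxz', hyz', hdz'⟩ := hp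
  rw [hxz'] at hzp
  have hez : z' = zp := Option.some_injective _ hzp
  subst hez
  obtain ⟨z'', hxz'', hyz'', hdz''⟩ := hq
  rw [hxz''] at hzq
  have hez' : z'' = zq := Option.some_injective _ hzq
  subst hez'
  obtain ⟨w, hw⟩ := hdp
  obtain ⟨w', hw'⟩ := hdq
  have hsum : S.d t = (S.d x ⊔ S.d y) + fun i => S.d t i - (S.d x ⊔ S.d y) i := by
    have h1 := S.deg_mul z' w t hw
    funext i
    have e1 := congrFun h1 i
    have e2 := congrFun hdz' i
    simp only [Pi.add_apply, Pi.sup_apply] at e1 e2 ⊢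
    omega
  obtain ⟨pt, _, hut⟩ := S.factor t (S.d x ⊔ S.d y) _ hsum
  have hdw : S.d w = fun i => S.d t i - (S.d x ⊔ S.d y) i := by
    have h1 := S.deg_mul z' w t hw
    funext i
    show S.d w i = S.d t i - (S.d x ⊔ S.d y) i
    have e1 := congrFun h1 i
    have e2 := congrFun hdz' i
    simp only [Pi.add_apply, Pi.sup_apply] at e1 e2 ⊢
    omega
  have hdw' : S.d w' = fun i => S.d t i - (S.d x ⊔ S.d y) i := by
    have h1 := S.deg_mul z'' w' t hw'
    funext i
    show S.d w' i = S.d t i - (S.d x ⊔ S.d y) i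
    have e1 := congrFun h1 i
    have e2 := congrFun hdz'' i
    simp only [Pi.add_apply, Pi.sup_apply] at e1 e2 ⊢
    omega
  have h1 := hut (z', w) ⟨hw, hdz', hdw⟩
  have h2 := hut (z'', w') ⟨hw', hdz'', hdw'⟩
  have hz : z' = z'' := congrArg Prod.fst (h1.trans h2.symm)
  subst hz
  have he : p.1 = q.1 := S.mul_left_cancel_s16 hxz' hxz''
  have hf : p.2 = q.2 := S.mul_left_cancel_s16 hyz' hyz''
  exact Prod.ext he hf

lemma Tmin_backward {x y t : T} {p : T × T} (hp : p ∈ S.Tmin x y)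
    {z : T} (hz : S.mul x p.1 = some z) (hd : S.divT z t) :
    S.divT x t ∧ S.divT y t := by
  obtain ⟨z', hxz', hyz', _⟩ := hp
  rw [hxz'] at hz
  obtain rfl := Option.some_injective _ hz
  obtain ⟨w, hw⟩ := hd
  obtain ⟨r, _, hr⟩ := S.assoc_right hxz' hw
  obtain ⟨r', _, hr'⟩ := S.assoc_right hyz' hw
  exact ⟨⟨r, hr⟩, ⟨r', hr'⟩⟩

end Semigraph

namespace Semigraph

open scoped Classical

variable {k T : Type*} (S : Semigraph k T)

lemma deltaMul_inl_inl (x y : T) :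
    S.deltaMul (Sum.inl x) (Sum.inl y) = (S.mul x y).map Sum.inl := rfl

lemma deltaMul_inl_inr_eq_some_iff (x : T) (p : S.DeltaMu) (a : S.Delta) :
    S.deltaMul (Sum.inl x) (Sum.inr p) = some a ↔
      ∃ q : S.DeltaMu, a = Sum.inr q ∧ q.1.2 = p.1.2 ∧ S.mul x p.1.1 = some q.1.1 := by
  obtain ⟨⟨y, l⟩, hp⟩ := p
  have hred : S.deltaMul (Sum.inl x) (Sum.inr ⟨(y, l), hp⟩) =
      (match S.mul x y with
        | some z =>
            if h : ∃ α ∈ l, S.le z α then some (Sum.inr ⟨(z, l), ⟨hp.1, h⟩⟩)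
            else none
        | none => none) := rfl
  rw [hred]
  constructor
  · intro h
    cases hm : S.mul x y with
    | none => rw [hm] at h; exact absurd h (by simp)
    | some z =>
      rw [hm] at h
      dsimp only at h
      by_cases hc : ∃ α ∈ l, S.le z α
      · rw [dif_pos hc] at h
        refine ⟨⟨(z, l), ⟨hp.1, hc⟩⟩, (Option.some_injective _ h).symm, rfl, rfl⟩
      · rw [dif_neg hc] at h
        exact absurd h (by simp)
  · rintro ⟨⟨⟨z, l'⟩, hq⟩, rfl, hl, hz⟩
    dsimp only at hl hz
    subst hl
    rw [hz]
    dsimp only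
    rw [dif_pos hq.2]

def base : S.Delta → T
  | Sum.inl t => t
  | Sum.inr p => p.1.1

def divD (x : T) (a : S.Delta) : Prop := ∃ b, S.deltaMul (Sum.inl x) b = some a

lemma divD_iff (x : T) (a : S.Delta) : S.divD x a ↔ S.divT x (S.base a) := by
  constructor
  · rintro ⟨b, hb⟩
    cases b with
    | inl y =>
      rw [deltaMul_inl_inl] at hb
      obtain ⟨t, ht, rfl⟩ := Option.map_eq_some_iff.mp hb
      exact ⟨y, ht⟩
    | inr p =>
      rw [deltaMul_inl_inr_eq_some_iff] at hb
      obtain ⟨q, rfl, hl, hz⟩ := hb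
      exact ⟨p.1.1, hz⟩
  · rintro ⟨b, hb⟩
    cases a with
    | inl t => exact ⟨Sum.inl b, by rw [deltaMul_inl_inl]; rw [show S.base (Sum.inl t) = t from rfl] at hb; rw [hb]; rfl⟩
    | inr q =>
      rw [show S.base (Sum.inr q) = q.1.1 from rfl] at hb
      -- b is a left divisor of q.1.1, so it inherits the ≤ condition
      have hble : ∃ α ∈ q.1.2, S.le b α := by
        obtain ⟨α, hα, β, hβ⟩ := q.2.2
        obtain ⟨γ, _, hγ⟩ := S.assoc_left hb hβ
        exact ⟨α, hα, γ, hγ⟩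
      refine ⟨Sum.inr ⟨(b, q.1.2), ⟨q.2.1, hble⟩⟩, ?_⟩
      exact (S.deltaMul_inl_inr_eq_some_iff x _ _).mpr ⟨q, rfl, rfl, hb⟩

lemma deltaMul_inl_cancel {x : T} {b b' a : S.Delta}
    (h : S.deltaMul (Sum.inl x) b = some a) (h' : S.deltaMul (Sum.inl x) b' = some a) :
    b = b' := by
  cases b with
  | inl u =>
    rw [deltaMul_inl_inl] at h
    obtain ⟨t, ht, rfl⟩ := Option.map_eq_some_iff.mp h
    cases b' with
    | inl u' =>
      rw [deltaMul_inl_inl] at h'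
      obtain ⟨t', ht', he⟩ := Option.map_eq_some_iff.mp h'
      obtain rfl : t' = t := Sum.inl_injective he
      exact congrArg Sum.inl (S.mul_left_cancel_s16 ht ht')
    | inr p' =>
      obtain ⟨q, hq, _, _⟩ := (S.deltaMul_inl_inr_eq_some_iff x p' _).mp h'
      exact absurd hq (by simp)
  | inr p =>
    rw [deltaMul_inl_inr_eq_some_iff] at h
    obtain ⟨q, rfl, hl, hz⟩ := h
    cases b' with
    | inl u' =>
      rw [deltaMul_inl_inl] at h'
      obtain ⟨t', _, he⟩ := Option.map_eq_some_iff.mp h'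
      exact absurd he (by simp)
    | inr p' =>
      obtain ⟨q', hq', hl', hz'⟩ := (S.deltaMul_inl_inr_eq_some_iff x p' _).mp h'
      obtain rfl : q' = q := Sum.inr_injective hq'.symm
      congr 1
      apply Subtype.ext
      exact Prod.ext (S.mul_left_cancel_s16 hz hz') (hl.symm.trans hl')

end Semigraph


section AnalysisLemmas

open scoped ComplexInnerProductSpace

variable {G : Type*}

lemma deltaVec_coord_self (t : G) : (deltaVec t : lp (fun _ : G => ℂ) 2) t = 1 := by
  letI := Classical.decEq G
  exact lp.single_apply_self 2 t 1

lemma deltaVec_coord_ne {t u : G} (h : u ≠ t) :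
    (deltaVec t : lp (fun _ : G => ℂ) 2) u = 0 := by
  letI := Classical.decEq G
  exact lp.single_apply_ne 2 t 1 h

lemma inner_deltaVec_left (t : G) (f : lp (fun _ : G => ℂ) 2) :
    ⟪deltaVec t, f⟫ = f t := by
  letI := Classical.decEq G
  calc ⟪deltaVec t, f⟫ = ⟪(1 : ℂ), f t⟫ := lp.inner_single_left t 1 f
    _ = f t := by simp

lemma single_eq_smul_deltaVec (i : G) (c : ℂ) [inst : DecidableEq G] :
    lp.single (E := fun _ : G => ℂ) 2 i c = c • deltaVec i := by
  apply lp.ext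
  funext j
  rw [lp.coeFn_smul, Pi.smul_apply]
  by_cases h : j = i
  · subst h
    rw [lp.single_apply_self, deltaVec_coord_self, smul_eq_mul, mul_one]
  · rw [lp.single_apply_ne _ _ _ h, deltaVec_coord_ne h, smul_eq_mul, mul_zero]

lemma clm_ext_deltaVec {A B : lp (fun _ : G => ℂ) 2 →L[ℂ] lp (fun _ : G => ℂ) 2}
    (h : ∀ t, A (deltaVec t) = B (deltaVec t)) : A = B := by
  haveI := Classical.decEq G
  apply ContinuousLinearMap.ext
  intro f
  have hs := lp.hasSum_single (E := fun _ : G => ℂ) (p := 2) (by norm_num) f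
  have hA := hs.mapL A
  have hB := hs.mapL B
  have heq : (fun i => A (lp.single 2 i (f i))) = fun i => B (lp.single 2 i (f i)) := by
    funext i
    rw [single_eq_smul_deltaVec, map_smul, map_smul, h i]
  rw [heq] at hA
  exact hA.unique hB

end AnalysisLemmas

section ProjLemma

open scoped ComplexInnerProductSpace
open scoped Classical

lemma proj_apply {k T : Type*} (S : Semigraph k T)
    (la : S.Delta → (lp (fun _ : S.Delta => ℂ) 2 →L[ℂ] lp (fun _ : S.Delta => ℂ) 2))
    (hla : IsLambdaFam S.deltaMul la) (x : T) (a : S.Delta) :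
    (la (Sum.inl x) * ContinuousLinearMap.adjoint (la (Sum.inl x))) (deltaVec a) =
      if S.divD x a then deltaVec a else 0 := by
  rw [ContinuousLinearMap.mul_apply]
  by_cases h : S.divD x a
  · obtain ⟨b, hb⟩ := h
    have hdiv : S.divD x a := ⟨b, hb⟩
    have hadj : (ContinuousLinearMap.adjoint (la (Sum.inl x))) (deltaVec a) = deltaVec b := by
      apply lp.ext
      funext u
      rw [← inner_deltaVec_left u, ContinuousLinearMap.adjoint_inner_right, hla (Sum.inl x) u]
      cases hm : S.deltaMul (Sum.inl x) u with
      | none =>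
        have hub : u ≠ b := by
          rintro rfl
          rw [hb] at hm
          exact absurd hm (by simp)
        rw [deltaVec_coord_ne hub]
        simp
      | some c =>
        dsimp only [Option.elim]
        rw [inner_deltaVec_left]
        by_cases hc : c = a
        · subst hc
          have hub : u = b := S.deltaMul_inl_cancel hm hb
          subst hub
          rw [deltaVec_coord_self, deltaVec_coord_self]
        · have hub : u ≠ b := by
            rintro rfl
            rw [hb] at hm
            exact hc (Option.some_injective _ hm.symm)
          rw [deltaVec_coord_ne hc, deltaVec_coord_ne hub]
    rw [hadj, hla (Sum.inl x) b, hb, if_pos hdiv]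
    rfl
  · have hadj : (ContinuousLinearMap.adjoint (la (Sum.inl x))) (deltaVec a) = 0 := by
      apply lp.ext
      funext u
      rw [← inner_deltaVec_left u, ContinuousLinearMap.adjoint_inner_right, hla (Sum.inl x) u]
      cases hm : S.deltaMul (Sum.inl x) u with
      | none => simp
      | some c =>
        dsimp only [Option.elim]
        rw [inner_deltaVec_left]
        have hc : c ≠ a := fun hc => h ⟨u, hc ▸ hm⟩
        rw [deltaVec_coord_ne hc]
        simp
    rw [hadj, map_zero, if_neg h]

end ProjLemma

/-- for a finitely aligned `T`,
`λ_x λ_x* λ_y λ_y* = Σ_(e,f) ∈ Tmin(x,y) λ_(xe) λ_(xe)*`. -/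
theorem lambda_range_proj_product {k T : Type*} (S : Semigraph k T)
    (hidem : ∀ e : T, S.d e = 0 → S.mul e e = some e)
    (hfin : ∀ x y : T, (S.Tmin x y).Finite)
    (la : S.Delta → (lp (fun _ : S.Delta => ℂ) 2 →L[ℂ] lp (fun _ : S.Delta => ℂ) 2))
    (hla : IsLambdaFam S.deltaMul la) :
    ∀ x y : T,
      la (Sum.inl x) * ContinuousLinearMap.adjoint (la (Sum.inl x)) *
        (la (Sum.inl y) * ContinuousLinearMap.adjoint (la (Sum.inl y))) =
      ∑ p ∈ (hfin x y).toFinset,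
        (S.mul x p.1).elim 0
          (fun z => la (Sum.inl z) * ContinuousLinearMap.adjoint (la (Sum.inl z))) := by
  classical
  intro x y
  apply clm_ext_deltaVec
  intro a
  have hL : (la (Sum.inl x) * ContinuousLinearMap.adjoint (la (Sum.inl x)) *
      (la (Sum.inl y) * ContinuousLinearMap.adjoint (la (Sum.inl y)))) (deltaVec a) =
      if S.divD x a ∧ S.divD y a then deltaVec a else 0 := by
    rw [ContinuousLinearMap.mul_apply, proj_apply S la hla y a]
    by_cases hy : S.divD y a
    · rw [if_pos hy, proj_apply S la hla x a]
      by_cases hx : S.divD x a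
      · rw [if_pos hx, if_pos ⟨hx, hy⟩]
      · rw [if_neg hx, if_neg fun hc => hx hc.1]
    · rw [if_neg hy, map_zero, if_neg fun hc => hy hc.2]
  rw [hL, ContinuousLinearMap.sum_apply]
  by_cases hxy : S.divD x a ∧ S.divD y a
  · rw [if_pos hxy]
    obtain ⟨hx, hy⟩ := hxy
    have hx' := (S.divD_iff x a).mp hx
    have hy' := (S.divD_iff y a).mp hy
    obtain ⟨p₀, hp₀, z₀, hz₀, hdz₀⟩ := S.Tmin_exists hx' hy'
    rw [Finset.sum_eq_single_of_mem p₀ ((hfin x y).mem_toFinset.mpr hp₀)]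
    · rw [hz₀]
      symm
      have hdd : S.divD z₀ a := (S.divD_iff z₀ a).mpr hdz₀
      show (la (Sum.inl z₀) * ContinuousLinearMap.adjoint (la (Sum.inl z₀))) (deltaVec a)
        = deltaVec a
      rw [proj_apply S la hla z₀ a, if_pos hdd]
    · intro p hpF hne
      have hpT : p ∈ S.Tmin x y := (hfin x y).mem_toFinset.mp hpF
      obtain ⟨z, hxz, hyz, hdz⟩ := hpT
      rw [hxz]
      show (la (Sum.inl z) * ContinuousLinearMap.adjoint (la (Sum.inl z))) (deltaVec a) = 0
      rw [proj_apply S la hla z a, if_neg]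
      intro hdza
      exact hne (S.Tmin_unique ⟨z, hxz, hyz, hdz⟩ hp₀ hxz hz₀
        ((S.divD_iff z a).mp hdza) hdz₀)
  · rw [if_neg hxy]
    symm
    apply Finset.sum_eq_zero
    intro p hpF
    have hpT : p ∈ S.Tmin x y := (hfin x y).mem_toFinset.mp hpF
    obtain ⟨z, hxz, hyz, hdz⟩ := hpT
    rw [hxz]
    show (la (Sum.inl z) * ContinuousLinearMap.adjoint (la (Sum.inl z))) (deltaVec a) = 0
    rw [proj_apply S la hla z a, if_neg]
    intro hdza
    have h2 := S.Tmin_backward ⟨z, hxz, hyz, hdz⟩ hxz ((S.divD_iff z a).mp hdza)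
    exact hxy ⟨(S.divD_iff x a).mpr h2.1, (S.divD_iff y a).mpr h2.2⟩
end
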